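/- Let n, m ≥ 1, κ ≥ 0, and let Q (n×n) be symmetric positive definite and Γ (m×m) symmetric positive definite. Let ρ : ℝ → ℝ, and let A, Ω, R : ℝ → Mat_{n×n}(ℝ) and B : ℝ → Mat_{n×m}(ℝ) be matrix-valued functions such that R(σ) is symmetric positive semidefinite for every σ, R is differentiable with derivative R', and the projected Riccati identity Ω(σ)ᵀ (R'(σ)ρ(σ) + A(σ)ᵀ R(σ) + R(σ) A(σ) + Q + κ R(σ) − R(σ) B(σ) Γ⁻¹ B(σ)ᵀ R(σ)) Ω(σ) = 0 holds for all σ. Fix t ∈ ℝ and let s : ℝ → ℝ satisfy HasDerivAt s (ρ(s(t))) t, and w : ℝ → ℝⁿ satisfy HasDerivAt w ((A(s(t)) − B(s(t)) Γ⁻¹ B(s(t))ᵀ R(s(t))) w(t)) t, together with the transversality conditions Ω(s(t)) w(t) = w(t). Then the function V(τ) := w(τ)ᵀ R(s(τ)) w(τ) satisfies HasDerivAt V (−w(t)ᵀ (Q + κ R(s(t)) + R(s(t)) B(s(t)) Γ⁻¹ B(s(t))ᵀ R(s(t))) w(t)) t, and this derivative is strictly negative whenever w(t) ≠ 0. -/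

import Mathlib

open Matrix

private lemma conjVec {n k : ℕ} (N : Matrix (Fin k) (Fin n) ℝ) (G : Matrix (Fin k) (Fin k) ℝ)
    (x : Fin n → ℝ) :
    x ⬝ᵥ ((Nᵀ * G * N) *ᵥ x) = (N *ᵥ x) ⬝ᵥ (G *ᵥ (N *ᵥ x)) := by
  rw [← mulVec_mulVec, ← mulVec_mulVec, dotProduct_mulVec, vecMul_transpose,
    dotProduct_mulVec, dotProduct_mulVec]

theorem lyapunov_decrease_transverse (n m : ℕ) (hn : 1 ≤ n) (hm : 1 ≤ m)
    (κ : ℝ) (hκ : 0 ≤ κ)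
    (Q : Matrix (Fin n) (Fin n) ℝ) (hQ : Q.PosDef)
    (Γ : Matrix (Fin m) (Fin m) ℝ) (hΓ : Γ.PosDef)
    (ρ : ℝ → ℝ)
    (A Om R R' : ℝ → Matrix (Fin n) (Fin n) ℝ)
    (B : ℝ → Matrix (Fin n) (Fin m) ℝ)
    (hR : ∀ σ, (R σ).PosSemidef)
    (hR' : ∀ σ, ∀ i j : Fin n, HasDerivAt (fun u => R u i j) (R' σ i j) σ)
    (hRic : ∀ σ, (Om σ)ᵀ *
      (ρ σ • R' σ + (A σ)ᵀ * R σ + R σ * A σ + Q + κ • R σ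
        - R σ * B σ * Γ⁻¹ * (B σ)ᵀ * R σ) * Om σ = 0)
    (t : ℝ) (s : ℝ → ℝ) (w : ℝ → Fin n → ℝ)
    (hs : HasDerivAt s (ρ (s t)) t)
    (hw : HasDerivAt w
      ((A (s t) - B (s t) * Γ⁻¹ * (B (s t))ᵀ * R (s t)) *ᵥ w t) t)
    (htrans : Om (s t) *ᵥ w t = w t) :
    HasDerivAt (fun τ => w τ ⬝ᵥ (R (s τ) *ᵥ w τ))
      (-(w t ⬝ᵥ ((Q + κ • R (s t) + R (s t) * B (s t) * Γ⁻¹ * (B (s t))ᵀ * R (s t))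
          *ᵥ w t))) t ∧
    (w t ≠ 0 →
      -(w t ⬝ᵥ ((Q + κ • R (s t) + R (s t) * B (s t) * Γ⁻¹ * (B (s t))ᵀ * R (s t))
          *ᵥ w t)) < 0) := by
  -- notation
  set Acl : Matrix (Fin n) (Fin n) ℝ :=
    A (s t) - B (s t) * Γ⁻¹ * (B (s t))ᵀ * R (s t) with hAcl
  set dw : Fin n → ℝ := Acl *ᵥ w t with hdw
  have hΓsym : Γᵀ = Γ := by
    rw [← Matrix.conjTranspose_eq_transpose_of_trivial, hΓ.1.eq]
  have hΓinv : Γ⁻¹ᵀ = Γ⁻¹ := by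
    rw [Matrix.transpose_nonsing_inv, hΓsym]
  have hRsym : (R (s t))ᵀ = R (s t) := by
    rw [← Matrix.conjTranspose_eq_transpose_of_trivial, (hR (s t)).1.eq]
  -- component derivatives
  have hwi : ∀ i, HasDerivAt (fun τ => w τ i) (dw i) t := fun i => hasDerivAt_pi.mp hw i
  have hRij : ∀ i j, HasDerivAt (fun τ => R (s τ) i j) (R' (s t) i j * ρ (s t)) t :=
    fun i j => (hR' (s t) i j).comp t hs
  -- derivative of V with the "natural" value
  have hV : HasDerivAt (fun τ => w τ ⬝ᵥ (R (s τ) *ᵥ w τ))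
      (∑ i, (dw i * (∑ j, R (s t) i j * w t j)
        + w t i * (∑ j, (R' (s t) i j * ρ (s t) * w t j + R (s t) i j * dw j)))) t := by
    have : ∀ τ, w τ ⬝ᵥ (R (s τ) *ᵥ w τ)
        = ∑ i, w τ i * (∑ j, R (s τ) i j * w τ j) := by
      intro τ; simp [dotProduct, mulVec]
    simp only [this]
    apply HasDerivAt.fun_sum
    intro i _
    exact (hwi i).mul <| HasDerivAt.fun_sum fun j _ => (hRij i j).mul (hwi j)
  -- rewrite natural value in matrix form
  have hval : (∑ i, (dw i * (∑ j, R (s t) i j * w t j)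
        + w t i * (∑ j, (R' (s t) i j * ρ (s t) * w t j + R (s t) i j * dw j))))
      = dw ⬝ᵥ (R (s t) *ᵥ w t) + w t ⬝ᵥ ((ρ (s t) • R' (s t)) *ᵥ w t)
        + w t ⬝ᵥ (R (s t) *ᵥ dw) := by
    simp [dotProduct, mulVec, Finset.sum_add_distrib, mul_add, Finset.mul_sum,
      Matrix.smul_apply, smul_eq_mul]
    ring_nf
    rw [add_right_comm]
    congr 1
    apply Finset.sum_congr rfl
    intro x _
    apply Finset.sum_congr rfl
    intro y _
    ring
  -- the key algebraic identity
  set M : Matrix (Fin n) (Fin n) ℝ :=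
    Q + κ • R (s t) + R (s t) * B (s t) * Γ⁻¹ * (B (s t))ᵀ * R (s t) with hM
  set P : Matrix (Fin n) (Fin n) ℝ :=
    ρ (s t) • R' (s t) + (A (s t))ᵀ * R (s t) + R (s t) * A (s t) + Q + κ • R (s t)
      - R (s t) * B (s t) * Γ⁻¹ * (B (s t))ᵀ * R (s t) with hP
  have hPzero : w t ⬝ᵥ (P *ᵥ w t) = 0 := by
    have h0 := hRic (s t)
    calc w t ⬝ᵥ (P *ᵥ w t)
        = w t ⬝ᵥ (((Om (s t))ᵀ * P * Om (s t)) *ᵥ w t) := by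
          rw [conjVec, htrans]
      _ = 0 := by rw [← hP] at h0; rw [h0]; simp
  -- first term: dw ⬝ᵥ (R w) = w ⬝ᵥ (Aclᵀ * R *ᵥ w)
  have h1 : dw ⬝ᵥ (R (s t) *ᵥ w t) = w t ⬝ᵥ ((Aclᵀ * R (s t)) *ᵥ w t) := by
    rw [hdw, dotProduct_mulVec, vecMul_mulVec, ← dotProduct_mulVec]
  have h3 : w t ⬝ᵥ (R (s t) *ᵥ dw) = w t ⬝ᵥ ((R (s t) * Acl) *ᵥ w t) := by
    rw [hdw, mulVec_mulVec]
  have hmat : Aclᵀ * R (s t) + ρ (s t) • R' (s t) + R (s t) * Acl = P - M := by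
    have hAclT : Aclᵀ = (A (s t))ᵀ - R (s t) * B (s t) * Γ⁻¹ * (B (s t))ᵀ := by
      rw [hAcl]
      simp [transpose_sub, transpose_mul, hΓinv, hRsym, Matrix.mul_assoc]
    rw [hAclT, hP, hM, hAcl]
    noncomm_ring
    simp only [Matrix.mul_assoc]
    abel
  have hD : (∑ i, (dw i * (∑ j, R (s t) i j * w t j)
        + w t i * (∑ j, (R' (s t) i j * ρ (s t) * w t j + R (s t) i j * dw j))))
      = -(w t ⬝ᵥ (M *ᵥ w t)) := by
    rw [hval, h1, h3]
    have : w t ⬝ᵥ ((Aclᵀ * R (s t)) *ᵥ w t) + w t ⬝ᵥ ((ρ (s t) • R' (s t)) *ᵥ w t)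
        + w t ⬝ᵥ ((R (s t) * Acl) *ᵥ w t)
        = w t ⬝ᵥ ((Aclᵀ * R (s t) + ρ (s t) • R' (s t) + R (s t) * Acl) *ᵥ w t) := by
      simp [add_mulVec, dotProduct_add]
    rw [this, hmat, sub_mulVec, dotProduct_sub, hPzero]
    ring
  constructor
  · exact hD ▸ hV
  · intro hwt
    rw [neg_lt_zero, hM]
    have hQpos : 0 < w t ⬝ᵥ (Q *ᵥ w t) := by
      have := fun h => hQ.dotProduct_mulVec_pos (x := w t) h
      simpa using this hwt
    have hκR : 0 ≤ w t ⬝ᵥ ((κ • R (s t)) *ᵥ w t) := by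
      rw [smul_mulVec, dotProduct_smul, smul_eq_mul]
      have := (hR (s t)).dotProduct_mulVec_nonneg (w t)
      simp only [star_trivial] at this
      positivity
    have hBterm : 0 ≤ w t ⬝ᵥ ((R (s t) * B (s t) * Γ⁻¹ * (B (s t))ᵀ * R (s t)) *ᵥ w t) := by
      have hrw : R (s t) * B (s t) * Γ⁻¹ * (B (s t))ᵀ * R (s t)
          = ((B (s t))ᵀ * R (s t))ᵀ * Γ⁻¹ * ((B (s t))ᵀ * R (s t)) := by
        simp [transpose_mul, hRsym, Matrix.mul_assoc]
      rw [hrw, conjVec]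
      have := (hΓ.inv).posSemidef.dotProduct_mulVec_nonneg (((B (s t))ᵀ * R (s t)) *ᵥ w t)
      simpa using this
    have : 0 < w t ⬝ᵥ ((Q + κ • R (s t) + R (s t) * B (s t) * Γ⁻¹ * (B (s t))ᵀ * R (s t)) *ᵥ w t) := by
      rw [add_mulVec, add_mulVec, dotProduct_add, dotProduct_add]
      linarith
    exact this
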